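/- With a_j = S(j/2), Σ_L the L×L Toeplitz matrix (a_{k-j}), and ω(L) = det(I - (1/2)Σ_L), one has G_{3/2} := 2(ω(4) + ω(2) - 2ω(3)) = 1/8 + 4/(9π²) + 32/(9π⁴). -/

import Mathlib

noncomputable def S (x : ℝ) : ℝ :=
  if x = 0 then 1 else Real.sin (Real.pi * x) / (Real.pi * x)

/-- The `L × L` symmetric Toeplitz matrix with entries `a_{k-j} = S((k-j)/2)`. -/
noncomputable def SigmaL (L : ℕ) : Matrix (Fin L) (Fin L) ℝ :=
  Matrix.of fun j k => S ((((k : ℤ) - (j : ℤ) : ℤ) : ℝ) / 2)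

noncomputable def ω (L : ℕ) : ℝ := ((1 : Matrix (Fin L) (Fin L) ℝ) - (1/2 : ℝ) • SigmaL L).det

lemma S0 : S 0 = 1 := by simp [S]

lemma Shalf : S (1/2) = 2 / Real.pi := by
  rw [S, if_neg (by norm_num)]
  rw [show Real.pi * (1/2) = Real.pi / 2 by ring, Real.sin_pi_div_two]
  field_simp

lemma Snhalf : S (-(1/2)) = 2 / Real.pi := by
  rw [S, if_neg (by norm_num)]
  rw [show Real.pi * (-(1/2)) = -(Real.pi / 2) by ring, Real.sin_neg, Real.sin_pi_div_two]
  field_simp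

lemma S1 : S 1 = 0 := by
  rw [S, if_neg (by norm_num)]
  simp [Real.sin_pi]

lemma Sn1 : S (-1) = 0 := by
  rw [S, if_neg (by norm_num)]
  rw [show Real.pi * (-1) = -Real.pi by ring, Real.sin_neg, Real.sin_pi]
  simp

lemma S3half : S (3/2) = -(2 / (3 * Real.pi)) := by
  rw [S, if_neg (by norm_num)]
  have h : Real.pi * (3/2) = Real.pi + Real.pi / 2 := by ring
  rw [h, Real.sin_add, Real.sin_pi, Real.cos_pi, Real.cos_pi_div_two, Real.sin_pi_div_two]
  rw [show ((0:ℝ) * 0 + -1 * 1) = -1 from by norm_num]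
  rw [div_eq_iff (by positivity : (Real.pi + Real.pi / 2 : ℝ) ≠ 0)]
  field_simp
  ring

lemma Sn3half : S (-(3/2)) = -(2 / (3 * Real.pi)) := by
  rw [S, if_neg (by norm_num)]
  have h : Real.pi * (-(3/2)) = -(Real.pi + Real.pi / 2) := by ring
  rw [h, Real.sin_neg, Real.sin_add, Real.sin_pi, Real.cos_pi, Real.cos_pi_div_two,
    Real.sin_pi_div_two]
  rw [show (-((0:ℝ) * 0 + -1 * 1)) = 1 from by norm_num]
  rw [div_eq_iff (neg_ne_zero.mpr (by positivity : (Real.pi + Real.pi / 2 : ℝ) ≠ 0))]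
  field_simp
  ring

lemma M2_eq : (1 : Matrix (Fin 2) (Fin 2) ℝ) - (1/2 : ℝ) • SigmaL 2 =
    !![1/2, -(1/Real.pi); -(1/Real.pi), 1/2] := by
  ext i j
  fin_cases i <;> fin_cases j <;>
    norm_num [SigmaL, Matrix.one_apply, S0, Shalf, Snhalf, Fin.ext_iff] <;> field_simp

lemma M3_eq : (1 : Matrix (Fin 3) (Fin 3) ℝ) - (1/2 : ℝ) • SigmaL 3 =
    !![1/2, -(1/Real.pi), 0; -(1/Real.pi), 1/2, -(1/Real.pi); 0, -(1/Real.pi), 1/2] := by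
  ext i j
  fin_cases i <;> fin_cases j <;>
    norm_num [SigmaL, Matrix.one_apply, S0, Shalf, Snhalf, S1, Sn1, Fin.ext_iff] <;> field_simp

lemma M4_eq : (1 : Matrix (Fin 4) (Fin 4) ℝ) - (1/2 : ℝ) • SigmaL 4 =
    !![1/2, -(1/Real.pi), 0, 1/(3*Real.pi);
       -(1/Real.pi), 1/2, -(1/Real.pi), 0;
       0, -(1/Real.pi), 1/2, -(1/Real.pi);
       1/(3*Real.pi), 0, -(1/Real.pi), 1/2] := by
  ext i j
  fin_cases i <;> fin_cases j <;>
    norm_num [SigmaL, Matrix.one_apply, S0, Shalf, Snhalf, S1, Sn1, S3half, Sn3half,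
      Fin.ext_iff] <;> field_simp <;> ring

lemma w2 : ω 2 = 1/4 - 1/Real.pi^2 := by
  rw [ω, M2_eq, Matrix.det_fin_two]
  simp
  ring

lemma w3 : ω 3 = 1/8 - 1/Real.pi^2 := by
  rw [ω, M3_eq, Matrix.det_fin_three]
  simp
  ring

lemma w4 : ω 4 = 1/16 - 7/(9*Real.pi^2) + 16/(9*Real.pi^4) := by
  rw [ω, M4_eq]
  simp [Matrix.det_succ_row_zero, Fin.sum_univ_succ, Fin.succAbove, Fin.castSucc,
    Fin.castAdd, Fin.castLE]
  ring

theorem gap_probability_three_halves :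
    2 * (ω 4 + ω 2 - 2 * ω 3) = 1/8 + 4 / (9 * Real.pi ^ 2) + 32 / (9 * Real.pi ^ 4) := by
  rw [w2, w3, w4]
  have hπ : Real.pi ≠ 0 := Real.pi_ne_zero
  field_simp
  ring
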